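/- Let φ(λ₁,…,λₙ) be a symmetric C² function inducing Φ on symmetric matrices via eigenvalues. At a diagonal matrix with distinct eigenvalues λᵢ, for any symmetric matrix Ż: Σ_{i,j,m,n} (∂²Φ/∂z_{ij}∂z_{mn}) Ż_{ij} Ż_{mn} = Σ_{k,l} (∂²φ/∂λₖ∂λₗ) Żₖₖ Żₗₗ + Σ_{k≠l} ((∂φ/∂λₖ − ∂φ/∂λₗ)/(λₖ − λₗ)) Ż_{kl}². -/

import Mathlib

open Polynomial Filter

/-- Basic facts about a `C^2` function of one real variable. -/
lemma sd11_c2 {F : Type*} [NormedAddCommGroup F] [NormedSpace ℝ F] {f : ℝ → F}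
    (hf : ContDiffAt ℝ 2 f 0) :
    (∀ᶠ t in nhds (0:ℝ), HasDerivAt f (deriv f t) t) ∧
      HasDerivAt (deriv f) (deriv (deriv f) 0) 0 := by
  obtain ⟨u, hu, hcd⟩ := hf.contDiffOn (le_refl 2) (by simp)
  have h0 : (0:ℝ) ∈ interior u := mem_interior_iff_mem_nhds.2 hu
  have hop : IsOpen (interior u) := isOpen_interior
  have hcd' : ContDiffOn ℝ 2 f (interior u) := hcd.mono interior_subset
  have hdiff : DifferentiableOn ℝ f (interior u) :=
    hcd'.differentiableOn (by norm_num)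
  constructor
  · filter_upwards [hop.mem_nhds h0] with t ht
    exact (hdiff.differentiableAt (hop.mem_nhds ht)).hasDerivAt
  · have h1 : ContDiffOn ℝ 1 (deriv f) (interior u) :=
      hcd'.deriv_of_isOpen hop (by norm_num)
    have := (h1.differentiableOn one_ne_zero).differentiableAt (hop.mem_nhds h0)
    exact this.hasDerivAt

/-- Sum of products with a zero factor: only one term survives. -/
lemma sd11_sum_prod {n : ℕ} (v : Fin n → ℝ) (c : Fin n → ℝ) (k : Fin n) (hv : v k = 0) :
    ∑ i, (∏ j ∈ Finset.univ.erase i, v j) • c i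
      = (∏ j ∈ Finset.univ.erase k, v j) * c k := by
  rw [Finset.sum_eq_single k]
  · simp [smul_eq_mul]
  · intro i _ hik
    have hk : k ∈ Finset.univ.erase i := Finset.mem_erase.2 ⟨fun h => hik h.symm, Finset.mem_univ _⟩
    rw [Finset.prod_eq_zero hk hv]
    simp
  · simp

lemma sd11_charpoly_eval {n : ℕ} (A : Matrix (Fin n) (Fin n) ℝ) (y : ℝ) :
    A.charpoly.eval y
      = Matrix.det (Matrix.of fun i j => (if i = j then y else 0) - A i j) := by
  rw [Matrix.charpoly]
  rw [show (Polynomial.eval y : ℝ[X] → ℝ) = (Polynomial.evalRingHom y : ℝ[X] → ℝ) from rfl]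
  rw [RingHom.map_det]
  congr 1
  ext i j
  by_cases h : i = j
  · subst h
    simp [Matrix.charmatrix_apply_eq]
  · simp [Matrix.charmatrix_apply_ne _ _ _ h, h]

lemma sd11_poly_fact {n : ℕ} (p : ℝ[X]) (hm : p.Monic) (hdeg : p.natDegree = n)
    (μ : Fin n → ℝ) (hinj : Function.Injective μ) (hroot : ∀ k, p.eval (μ k) = 0) :
    p = ∏ i, (X - C (μ i)) := by
  have hp0 : p ≠ 0 := hm.ne_zero
  set q : ℝ[X] := ∏ i, (X - C (μ i)) with hq
  have hqm : q.Monic := monic_prod_of_monic _ _ fun i _ => monic_X_sub_C _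
  have hqdeg : q.natDegree = n := by
    rw [hq, Polynomial.natDegree_prod _ _ fun i _ => X_sub_C_ne_zero _]
    simp
  have hdvd : q ∣ p := by
    have hM : (Finset.univ.val.map μ) ≤ p.roots := by
      refine (Multiset.le_iff_subset ((Finset.univ.nodup.map hinj))).2 fun a ha => ?_
      obtain ⟨k, _, rfl⟩ := Multiset.mem_map.1 ha
      rw [Polynomial.mem_roots hp0]
      exact hroot k
    calc q = ((Finset.univ.val.map μ).map fun a => X - C a).prod := by
              rw [hq, Finset.prod_eq_multiset_prod, Multiset.map_map]; rfl
      _ ∣ (p.roots.map fun a => X - C a).prod :=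
            Multiset.prod_dvd_prod_of_le (Multiset.map_le_map hM)
      _ ∣ p := p.prod_multiset_X_sub_C_dvd
  obtain ⟨c, hc⟩ := hdvd
  have hc0 : c ≠ 0 := by rintro rfl; simp at hc; exact hp0 hc
  have hcd : c.natDegree = 0 := by
    have := Polynomial.natDegree_mul hqm.ne_zero hc0
    rw [← hc, hdeg, hqdeg] at this
    omega
  have hclead : c.leadingCoeff = 1 := by
    have := congrArg Polynomial.leadingCoeff hc
    rw [Polynomial.leadingCoeff_mul, hqm.leadingCoeff, one_mul, hm.leadingCoeff] at this
    exact this.symm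
  have : c = 1 := by
    rw [Polynomial.eq_C_of_natDegree_eq_zero hcd]
    rw [Polynomial.leadingCoeff, hcd] at hclead
    rw [hclead]; simp
  rw [hc, this, mul_one]

open Polynomial Filter

noncomputable def sd11q (n : ℕ) (l : Fin n → ℝ) (Z : Fin n → Fin n → ℝ) (t x : ℝ) : ℝ :=
  Matrix.det (Matrix.of fun i j => (if i = j then x - l i else 0) - t * Z i j)

noncomputable def sd11S (n : ℕ) (l : Fin n → ℝ) (Z : Fin n → Fin n → ℝ) (t x : ℝ) : ℝ :=
  ∑ σ ∈ Finset.univ.erase (1 : Equiv.Perm (Fin n)),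
    ((Equiv.Perm.sign σ : ℤ) : ℝ) *
      (t ^ (σ.support.card - 2) *
        ((∏ i ∈ σ.supportᶜ, (x - l i - t * Z i i)) * ∏ i ∈ σ.support, (-Z (σ i) i)))

lemma sd11_two_le_card {n : ℕ} {σ : Equiv.Perm (Fin n)} (h : σ ≠ 1) :
    2 ≤ σ.support.card := by
  have h0 : σ.support.card ≠ 0 := by
    simp [Equiv.Perm.card_support_eq_zero, h]
  have h1 : σ.support.card ≠ 1 := Equiv.Perm.card_support_ne_one σ
  omega

lemma sd11_qdecomp (n : ℕ) (l : Fin n → ℝ) (Z : Fin n → Fin n → ℝ) (t x : ℝ) :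
    sd11q n l Z t x = (∏ i, (x - l i - t * Z i i)) + t ^ 2 * sd11S n l Z t x := by
  rw [sd11q, Matrix.det_apply', sd11S, Finset.mul_sum,
    ← Finset.add_sum_erase _ _ (Finset.mem_univ (1 : Equiv.Perm (Fin n)))]
  congr 1
  · simp
  · refine Finset.sum_congr rfl fun σ hσ => ?_
    have hσ1 : σ ≠ 1 := (Finset.mem_erase.1 hσ).1
    have hcard := sd11_two_le_card hσ1
    rw [← Finset.prod_mul_prod_compl σ.support fun i =>
      (Matrix.of fun i j => (if i = j then x - l i else 0) - t * Z i j) (σ i) i]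
    have h2 : ∏ i ∈ σ.supportᶜ,
        (Matrix.of fun i j => (if i = j then x - l i else 0) - t * Z i j) (σ i) i
        = ∏ i ∈ σ.supportᶜ, (x - l i - t * Z i i) := by
      refine Finset.prod_congr rfl fun i hi => ?_
      have : σ i = i := by
        have := Finset.mem_compl.1 hi
        simpa [Equiv.Perm.notMem_support] using this
      simp [Matrix.of_apply, this, sub_sub]
    have h3 : ∏ i ∈ σ.support,
        (Matrix.of fun i j => (if i = j then x - l i else 0) - t * Z i j) (σ i) i
        = t ^ σ.support.card * ∏ i ∈ σ.support, (-Z (σ i) i) := by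
      rw [← Finset.prod_const t, ← Finset.prod_mul_distrib]
      refine Finset.prod_congr rfl fun i hi => ?_
      have : σ i ≠ i := Equiv.Perm.mem_support.1 hi
      rw [Matrix.of_apply, if_neg this]
      ring
    rw [h2, h3]
    have h4 : t ^ σ.support.card = t ^ 2 * t ^ (σ.support.card - 2) := by
      rw [← pow_add]
      congr 1
      omega
    rw [h4]
    ring

lemma sd11_S_val {n : ℕ} (l : Fin n → ℝ) (Z : Fin n → Fin n → ℝ)
    (hsym : ∀ i j, Z j i = Z i j) (k : Fin n) :
    sd11S n l Z 0 (l k)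
      = -∑ m ∈ Finset.univ.erase k,
          Z k m ^ 2 * ∏ j ∈ (Finset.univ.erase k).erase m, (l k - l j) := by
  rw [sd11S]
  have hinj : ∀ m ∈ Finset.univ.erase k, ∀ m' ∈ Finset.univ.erase k,
      Equiv.swap k m = Equiv.swap k m' → m = m' := by
    intro m hm m' hm' h
    have := congrArg (fun e : Equiv.Perm (Fin n) => e k) h
    simpa [Equiv.swap_apply_left] using this
  have hsub : (Finset.univ.erase k).image (fun m => Equiv.swap k m)
      ⊆ Finset.univ.erase (1 : Equiv.Perm (Fin n)) := by
    intro σ hσ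
    obtain ⟨m, hm, rfl⟩ := Finset.mem_image.1 hσ
    have hmk : k ≠ m := fun h => (Finset.mem_erase.1 hm).1 h.symm
    exact Finset.mem_erase.2 ⟨by simpa using hmk, Finset.mem_univ _⟩
  have hzero : ∀ σ ∈ Finset.univ.erase (1 : Equiv.Perm (Fin n)),
      σ ∉ (Finset.univ.erase k).image (fun m => Equiv.swap k m) →
      ((Equiv.Perm.sign σ : ℤ) : ℝ) *
      ((0:ℝ) ^ (σ.support.card - 2) *
        ((∏ i ∈ σ.supportᶜ, (l k - l i - 0 * Z i i)) * ∏ i ∈ σ.support, (-Z (σ i) i))) = 0 := by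
    intro σ hσ hσim
    have hσ1 : σ ≠ 1 := (Finset.mem_erase.1 hσ).1
    have hcard := sd11_two_le_card hσ1
    by_cases hc : σ.support.card = 2
    · obtain ⟨a, b, hab, rfl⟩ := Equiv.Perm.card_support_eq_two.1 hc
      by_cases hk : Equiv.swap a b k = k
      · have hknot : k ∉ (Equiv.swap a b).support := Equiv.Perm.notMem_support.2 hk
        rw [Finset.prod_eq_zero (Finset.mem_compl.2 hknot) (by ring)]
        simp
      · exfalso
        apply hσim
        refine Finset.mem_image.2 ⟨Equiv.swap a b k,
          Finset.mem_erase.2 ⟨hk, Finset.mem_univ _⟩, ?_⟩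
        have hk' : k ∈ ({a, b} : Finset (Fin n)) := by
          have : k ∈ (Equiv.swap a b).support := Equiv.Perm.mem_support.2 hk
          rwa [Equiv.Perm.support_swap hab] at this
        rcases Finset.mem_insert.1 hk' with h | h
        · subst h
          rw [Equiv.swap_apply_left]
        · have h' : k = b := Finset.mem_singleton.1 h
          subst h'
          rw [Equiv.swap_apply_right, Equiv.swap_comm]
    · have : σ.support.card - 2 ≠ 0 := by omega
      rw [zero_pow this]
      simp
  rw [← Finset.sum_subset hsub hzero, Finset.sum_image hinj]
  rw [← Finset.sum_neg_distrib]
  refine Finset.sum_congr rfl fun m hm => ?_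
  have hkm : k ≠ m := fun h => (Finset.mem_erase.1 hm).1 h.symm
  have hsupp : (Equiv.swap k m).support = {k, m} := Equiv.Perm.support_swap hkm
  have hcard2 : (Equiv.swap k m).support.card = 2 := by
    rw [hsupp]; rw [Finset.card_insert_of_notMem (by simpa using hkm)]; simp
  rw [Equiv.Perm.sign_swap hkm, hcard2, hsupp]
  have hcompl : ({k, m} : Finset (Fin n))ᶜ = (Finset.univ.erase k).erase m := by
    ext i
    simp [Finset.mem_compl, Finset.mem_erase, Finset.mem_insert, not_or]
    tauto
  rw [hcompl]
  rw [Finset.prod_pair hkm]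
  rw [Equiv.swap_apply_left, Equiv.swap_apply_right]
  have : Z m k = Z k m := hsym k m
  rw [this]
  have hprod : ∏ j ∈ (Finset.univ.erase k).erase m, (l k - l j - 0 * Z j j)
      = ∏ j ∈ (Finset.univ.erase k).erase m, (l k - l j) := by
    refine Finset.prod_congr rfl fun j _ => by ring
  rw [hprod]
  push_cast
  ring

lemma sd11_S_contDiff (n : ℕ) (l : Fin n → ℝ) (Z : Fin n → Fin n → ℝ) :
    ContDiff ℝ 2 (fun p : ℝ × ℝ => sd11S n l Z p.1 p.2) := by
  unfold sd11S
  apply ContDiff.sum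
  intro σ _
  apply ContDiff.mul contDiff_const
  apply ContDiff.mul
  · exact (contDiff_fst.pow _)
  · apply ContDiff.mul
    · apply contDiff_prod
      intro i _
      exact (contDiff_snd.sub contDiff_const).sub (contDiff_fst.mul contDiff_const)
    · exact contDiff_const

open Filter

lemma sd11_core {n : ℕ} (l : Fin n → ℝ) (Z : Fin n → Fin n → ℝ)
    (hdist : Function.Injective l) (hsym : ∀ i j, Z j i = Z i j) (k : Fin n)
    (ν : ℝ → ℝ) (hν : ContDiffAt ℝ 2 ν 0) (hν0 : ν 0 = l k)
    (heq : ∀ᶠ t in nhds (0:ℝ), sd11q n l Z t (ν t) = 0) :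
    deriv ν 0 = Z k k ∧
      deriv (deriv ν) 0 = 2 * ∑ m ∈ Finset.univ.erase k, Z k m ^ 2 / (l k - l m) := by
  classical
  set P : ℝ := ∏ j ∈ Finset.univ.erase k, (l k - l j) with hPdef
  have hP : P ≠ 0 := by
    rw [hPdef]
    refine Finset.prod_ne_zero_iff.2 fun j hj => ?_
    have : k ≠ j := fun h => (Finset.mem_erase.1 hj).1 h.symm
    exact sub_ne_zero.2 fun h => this (hdist h)
  set g : Fin n → ℝ → ℝ := fun i t => ν t - l i - t * Z i i with hgdef
  set a : ℝ → ℝ := fun t => ∏ i, g i t with hadef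
  set u : ℝ → ℝ := fun t => sd11S n l Z t (ν t) with hudef
  set w : ℝ → ℝ := fun t => t ^ 2 * u t with hwdef
  have hu : ContDiffAt ℝ 2 u 0 := by
    have h1 : ContDiffAt ℝ 2 (fun p : ℝ × ℝ => sd11S n l Z p.1 p.2) (0, ν 0) :=
      (sd11_S_contDiff n l Z).contDiffAt
    exact h1.comp (f := fun t : ℝ => ((t, ν t) : ℝ × ℝ)) 0 (contDiffAt_id.prodMk hν)
  obtain ⟨hν_ev, hν'⟩ := sd11_c2 hν
  obtain ⟨hu_ev, hu'⟩ := sd11_c2 hu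
  set d : ℝ → ℝ := deriv ν with hddef
  set U : ℝ → ℝ := deriv u with hUdef
  set e : ℝ := deriv d 0 with hedef
  -- eventual identity a = -w
  have haw : a =ᶠ[nhds (0:ℝ)] fun t => -(w t) := by
    filter_upwards [heq] with t ht
    have := sd11_qdecomp n l Z t (ν t)
    rw [ht] at this
    have ha : a t = ∏ i, (ν t - l i - t * Z i i) := rfl
    rw [ha]
    have hw : w t = t ^ 2 * sd11S n l Z t (ν t) := rfl
    rw [hw]
    linarith [this]
  -- derivative formulas
  set A1 : ℝ → ℝ := fun t => ∑ i, (∏ j ∈ Finset.univ.erase i, g j t) * (d t - Z i i) with hA1def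
  set W1 : ℝ → ℝ := fun t => 2 * t * u t + t ^ 2 * U t with hW1def
  have hg_ev : ∀ᶠ t in nhds (0:ℝ), ∀ i, HasDerivAt (g i) (d t - Z i i) t := by
    filter_upwards [hν_ev] with t ht i
    simpa using (ht.sub_const (l i)).fun_sub ((hasDerivAt_id t).mul_const (Z i i))
  have ha_ev : ∀ᶠ t in nhds (0:ℝ), HasDerivAt a (A1 t) t := by
    filter_upwards [hg_ev] with t ht
    have h := HasDerivAt.fun_finsetProd (u := Finset.univ) (f := g)
      (f' := fun i => d t - Z i i) (fun i _ => ht i)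
    have h2 : A1 t = ∑ i, (∏ j ∈ Finset.univ.erase i, g j t) • (d t - Z i i) := by
      simp [hA1def, smul_eq_mul]
    rw [h2]
    exact h
  have hw_ev : ∀ᶠ t in nhds (0:ℝ), HasDerivAt w (W1 t) t := by
    filter_upwards [hu_ev] with t ht
    have := (hasDerivAt_pow 2 t).fun_mul ht
    simpa [hW1def] using this.congr_deriv (by push_cast; ring)
  -- transfer: A1 = -W1 eventually
  have hderiva : deriv a =ᶠ[nhds (0:ℝ)] A1 := by
    filter_upwards [ha_ev] with t ht using ht.deriv
  have hderivw : deriv w =ᶠ[nhds (0:ℝ)] W1 := by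
    filter_upwards [hw_ev] with t ht using ht.deriv
  have hAW : A1 =ᶠ[nhds (0:ℝ)] fun t => -(W1 t) := by
    have h2 := haw.deriv
    filter_upwards [h2, hderiva, hderivw] with t h2t hat hwt
    rw [← hat, h2t, deriv.fun_neg, hwt]
  have hg0 : ∀ m, g m 0 = l k - l m := by
    intro m
    simp [hgdef, hν0]
  -- first derivative : d 0 = Z k k
  have hA10 : A1 0 = P * (d 0 - Z k k) := by
    rw [hA1def]
    simp only
    have hc : ∀ i, (∏ j ∈ Finset.univ.erase i, g j 0) * (d 0 - Z i i)
        = (∏ j ∈ Finset.univ.erase i, (l k - l j)) • (d 0 - Z i i) := by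
      intro i
      rw [smul_eq_mul]
      congr 1
      exact Finset.prod_congr rfl fun j _ => hg0 j
    rw [Finset.sum_congr rfl fun i _ => hc i]
    rw [sd11_sum_prod (fun j => l k - l j) (fun i => d 0 - Z i i) k (by ring)]
  have hW10 : W1 0 = 0 := by simp [hW1def]
  have hfirst : d 0 = Z k k := by
    have h0 : A1 0 = -(W1 0) := hAW.eq_of_nhds
    rw [hA10, hW10, neg_zero] at h0
    rcases mul_eq_zero.1 h0 with h | h
    · exact absurd h hP
    · linarith
  refine ⟨hfirst, ?_⟩
  -- second derivative
  have hg0' : ∀ i, HasDerivAt (g i) (Z k k - Z i i) 0 := by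
    intro i
    have := hg_ev.self_of_nhds i
    rwa [hfirst] at this
  have hA1' : HasDerivAt A1 (P * e) 0 := by
    have hterm : ∀ i : Fin n, HasDerivAt
        (fun t => (∏ j ∈ Finset.univ.erase i, g j t) * (d t - Z i i))
        ((∑ j ∈ Finset.univ.erase i,
            (∏ m ∈ (Finset.univ.erase i).erase j, g m 0) • (Z k k - Z j j)) * (d 0 - Z i i)
          + (∏ j ∈ Finset.univ.erase i, g j 0) * e) 0 := by
      intro i
      have hprod : HasDerivAt (fun t => ∏ j ∈ Finset.univ.erase i, g j t)
          (∑ j ∈ (Finset.univ.erase i),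
            (∏ m ∈ (Finset.univ.erase i).erase j, g m 0) • (Z k k - Z j j)) 0 :=
        HasDerivAt.fun_finsetProd fun j _ => hg0' j
      have hd : HasDerivAt (fun t => d t - Z i i) e 0 := hν'.sub_const (Z i i)
      exact hprod.mul hd
    have hsum := HasDerivAt.fun_sum (fun i (_ : i ∈ Finset.univ) => hterm i)
    have hval : ∑ i, ((∑ j ∈ Finset.univ.erase i,
            (∏ m ∈ (Finset.univ.erase i).erase j, g m 0) • (Z k k - Z j j)) * (d 0 - Z i i)
          + (∏ j ∈ Finset.univ.erase i, g j 0) * e) = P * e := by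
      rw [Finset.sum_add_distrib]
      have h1 : ∑ i, (∑ j ∈ Finset.univ.erase i,
            (∏ m ∈ (Finset.univ.erase i).erase j, g m 0) • (Z k k - Z j j)) * (d 0 - Z i i)
          = 0 := by
        refine Finset.sum_eq_zero fun i _ => ?_
        by_cases hik : i = k
        · subst hik
          rw [hfirst, sub_self, mul_zero]
        · have hinner : ∑ j ∈ Finset.univ.erase i,
              (∏ m ∈ (Finset.univ.erase i).erase j, g m 0) • (Z k k - Z j j) = 0 := by
            refine Finset.sum_eq_zero fun j hj => ?_
            by_cases hjk : j = k
            · subst hjk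
              simp
            · have hkmem : k ∈ (Finset.univ.erase i).erase j := by
                refine Finset.mem_erase.2 ⟨fun h => hjk h.symm,
                  Finset.mem_erase.2 ⟨fun h => hik h.symm, Finset.mem_univ _⟩⟩
              rw [Finset.prod_eq_zero hkmem (by rw [hg0 k]; ring)]
              simp
          rw [hinner, zero_mul]
      have h2 : ∑ i, (∏ j ∈ Finset.univ.erase i, g j 0) * e = P * e := by
        have hc : ∀ i : Fin n, (∏ j ∈ Finset.univ.erase i, g j 0) * e
            = (∏ j ∈ Finset.univ.erase i, (l k - l j)) • e := by
          intro i
          rw [smul_eq_mul]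
          congr 1
          exact Finset.prod_congr rfl fun j _ => hg0 j
        rw [Finset.sum_congr rfl fun i _ => hc i]
        rw [sd11_sum_prod (fun j => l k - l j) (fun _ => e) k (by ring)]
      rw [h1, h2, zero_add]
    rw [← hval]
    exact hsum
  have hW1' : HasDerivAt W1 (2 * u 0) 0 := by
    have h1 : HasDerivAt (fun t : ℝ => 2 * t * u t) (2 * u 0) 0 := by
      have hc : HasDerivAt (fun t : ℝ => 2 * t) 2 0 := by
        simpa using (hasDerivAt_id (0:ℝ)).const_mul (2:ℝ)
      have := hc.fun_mul (hu_ev.self_of_nhds)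
      simpa using this
    have h2 : HasDerivAt (fun t : ℝ => t ^ 2 * U t) 0 0 := by
      have := (hasDerivAt_pow 2 (0:ℝ)).fun_mul hu'
      simpa using this
    have := h1.fun_add h2
    simpa [hW1def] using this
  -- uniqueness
  have huniq : P * e = -(2 * u 0) := by
    have hA1W : HasDerivAt A1 (-(2 * u 0)) 0 := by
      have hWneg : HasDerivAt (fun t => -(W1 t)) (-(2 * u 0)) 0 := hW1'.neg
      exact hWneg.congr_of_eventuallyEq hAW
    exact hA1'.unique hA1W
  have hu0 : u 0 = sd11S n l Z 0 (l k) := by rw [hudef]; simp [hν0]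
  have hSval := sd11_S_val l Z hsym k
  rw [hu0, hSval] at huniq
  -- conclude
  have hterm : ∀ m ∈ Finset.univ.erase k,
      Z k m ^ 2 * ∏ j ∈ (Finset.univ.erase k).erase m, (l k - l j)
        = Z k m ^ 2 / (l k - l m) * P := by
    intro m hm
    have hmP : P = (l k - l m) * ∏ j ∈ (Finset.univ.erase k).erase m, (l k - l j) := by
      rw [hPdef]
      exact (Finset.mul_prod_erase _ _ hm).symm
    have hlm : l k - l m ≠ 0 := by
      have : k ≠ m := fun h => (Finset.mem_erase.1 hm).1 h.symm
      exact sub_ne_zero.2 fun h => this (hdist h)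
    rw [hmP]
    field_simp
  have hgoal : P * e = P * (2 * ∑ m ∈ Finset.univ.erase k, Z k m ^ 2 / (l k - l m)) := by
    calc P * e = -(2 * -∑ m ∈ Finset.univ.erase k,
          Z k m ^ 2 * ∏ j ∈ (Finset.univ.erase k).erase m, (l k - l j)) := huniq
      _ = 2 * ∑ m ∈ Finset.univ.erase k,
          Z k m ^ 2 * ∏ j ∈ (Finset.univ.erase k).erase m, (l k - l j) := by ring
      _ = 2 * ∑ m ∈ Finset.univ.erase k, Z k m ^ 2 / (l k - l m) * P := by
          rw [Finset.sum_congr rfl hterm]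
      _ = P * (2 * ∑ m ∈ Finset.univ.erase k, Z k m ^ 2 / (l k - l m)) := by
          rw [← Finset.sum_mul]
          ring
  exact mul_left_cancel₀ hP hgoal

open Polynomial in
lemma sd11_mu {n : ℕ} (l : Fin n → ℝ) (hdist : Function.Injective l) :
    ∃ μ : (Fin n → Fin n → ℝ) → (Fin n → ℝ),
      ContDiffAt ℝ 2 μ (fun i j => if i = j then l i else 0) ∧
      μ (fun i j => if i = j then l i else 0) = l ∧
      ∀ᶠ Z in nhds (fun i j => if i = j then l i else (0:ℝ)),
        (Matrix.of Z).charpoly = ∏ i, (Polynomial.X - Polynomial.C (μ Z i)) := by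
  classical
  set D : Fin n → Fin n → ℝ := fun i j => if i = j then l i else 0 with hDdef
  set G : ((Fin n → Fin n → ℝ) × (Fin n → ℝ)) → (Fin n → ℝ) := fun p =>
    fun k => Matrix.det (Matrix.of fun i j => (if i = j then p.2 k else 0) - p.1 i j) with hGdef
  set F : ((Fin n → Fin n → ℝ) × (Fin n → ℝ)) → ((Fin n → Fin n → ℝ) × (Fin n → ℝ)) :=
    fun p => (p.1, G p) with hFdef
  have hp1 : ∀ a b : Fin n, ContDiff ℝ 2
      (fun p : (Fin n → Fin n → ℝ) × (Fin n → ℝ) => p.1 a b) :=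
    fun a b => contDiff_pi.mp (contDiff_pi.mp contDiff_fst a) b
  have hp2 : ∀ k : Fin n, ContDiff ℝ 2
      (fun p : (Fin n → Fin n → ℝ) × (Fin n → ℝ) => p.2 k) :=
    fun k => contDiff_pi.mp contDiff_snd k
  have hGc : ContDiff ℝ 2 G := by
    rw [hGdef]
    apply contDiff_pi.mpr
    intro k
    have hrep : (fun p : (Fin n → Fin n → ℝ) × (Fin n → ℝ) =>
        Matrix.det (Matrix.of fun i j => (if i = j then p.2 k else 0) - p.1 i j))
        = fun p => ∑ σ : Equiv.Perm (Fin n), ((Equiv.Perm.sign σ : ℤ) : ℝ) *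
            ∏ i, ((if σ i = i then p.2 k else 0) - p.1 (σ i) i) := by
      funext p
      rw [Matrix.det_apply']
      simp only [Matrix.of_apply]
    rw [hrep]
    apply ContDiff.sum
    intro σ _
    apply ContDiff.mul contDiff_const
    apply contDiff_prod
    intro i _
    by_cases h : σ i = i
    · simp only [h, if_pos]
      exact (hp2 k).sub (hp1 i i)
    · simp only [h, if_neg, if_false]
      exact contDiff_const.sub (hp1 (σ i) i)
  have hGD : ∀ x : Fin n → ℝ, G (D, x) = fun k => ∏ i, (x k - l i) := by
    intro x
    funext k
    rw [hGdef]
    simp only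
    have : (Matrix.of fun i j => (if i = j then x k else 0) - D i j)
        = Matrix.diagonal (fun i => x k - l i) := by
      ext i j
      by_cases h : i = j
      · subst h; simp [hDdef, Matrix.diagonal_apply_eq]
      · simp [hDdef, h, Matrix.diagonal_apply_ne _ h]
    rw [this, Matrix.det_diagonal]
  have hGD0 : G (D, l) = 0 := by
    rw [hGD]
    funext k
    exact Finset.prod_eq_zero (Finset.mem_univ k) (by ring)
  have hFc : ContDiff ℝ 2 F := contDiff_fst.prodMk hGc
  have hGdiff : DifferentiableAt ℝ G (D, l) :=
    (hGc.differentiable (by norm_num)).differentiableAt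
  set g' := fderiv ℝ G (D, l) with hg'def
  have hG' : HasFDerivAt G g' (D, l) := hGdiff.hasFDerivAt
  set f'₀ := (ContinuousLinearMap.fst ℝ (Fin n → Fin n → ℝ) (Fin n → ℝ)).prod g' with hf0def
  have hF' : HasFDerivAt F f'₀ (D, l) := hasFDerivAt_fst.prodMk hG'
  -- structure of g' in the second variable
  have hdiag : ∀ xv : Fin n → ℝ, g' (0, xv)
      = fun k => (∏ j ∈ Finset.univ.erase k, (l k - l j)) * xv k := by
    intro xv
    have hc : HasDerivAt (fun s : ℝ => ((D, l + s • xv) :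
        (Fin n → Fin n → ℝ) × (Fin n → ℝ))) (0, xv) 0 := by
      apply HasDerivAt.prodMk
      · exact hasDerivAt_const 0 D
      · simpa using ((hasDerivAt_id (0:ℝ)).smul_const xv).const_add l
    have h1 : HasDerivAt (fun s : ℝ => G (D, l + s • xv)) (g' (0, xv)) 0 :=
      hG'.comp_hasDerivAt_of_eq 0 hc (by simp)
    have h2 : HasDerivAt (fun s : ℝ => G (D, l + s • xv))
        (fun k => (∏ j ∈ Finset.univ.erase k, (l k - l j)) * xv k) 0 := by
      have hre : (fun s : ℝ => G (D, l + s • xv))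
          = fun s => fun k => ∏ i, (l k + s * xv k - l i) := by
        funext s
        rw [hGD]
        funext k
        simp [Pi.add_apply]
      rw [hre]
      apply hasDerivAt_pi.mpr
      intro k
      have hfac : ∀ i : Fin n, HasDerivAt (fun s : ℝ => l k + s * xv k - l i) (xv k) 0 := by
        intro i
        simpa using (((hasDerivAt_id (0:ℝ)).mul_const (xv k)).const_add (l k)).sub_const (l i)
      have := HasDerivAt.fun_finsetProd (u := Finset.univ)
        (f := fun i s => l k + s * xv k - l i) (f' := fun _ => xv k) (fun i _ => hfac i)
      have hval : ∑ i, (∏ j ∈ Finset.univ.erase i, (l k + 0 * xv k - l j)) • xv k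
          = (∏ j ∈ Finset.univ.erase k, (l k - l j)) * xv k := by
        have hfix : ∀ i : Fin n, (∏ j ∈ Finset.univ.erase i, (l k + 0 * xv k - l j))
            = ∏ j ∈ Finset.univ.erase i, (l k - l j) :=
          fun i => Finset.prod_congr rfl fun j _ => by ring
        rw [Finset.sum_congr rfl fun i _ => by rw [hfix i]]
        exact sd11_sum_prod (fun j => l k - l j) (fun _ => xv k) k (by ring)
      rw [← hval]
      exact this
    exact h1.unique h2
  -- injectivity of f'₀
  have hPne : ∀ k : Fin n, (∏ j ∈ Finset.univ.erase k, (l k - l j)) ≠ 0 := by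
    intro k
    refine Finset.prod_ne_zero_iff.2 fun j hj => ?_
    have : k ≠ j := fun h => (Finset.mem_erase.1 hj).1 h.symm
    exact sub_ne_zero.2 fun h => this (hdist h)
  have hinj : ∀ p : (Fin n → Fin n → ℝ) × (Fin n → ℝ), f'₀ p = 0 → p = 0 := by
    intro p hp
    have h1 : p.1 = 0 := congrArg Prod.fst hp
    have h2 : g' p = 0 := congrArg Prod.snd hp
    have hps : p = (0, p.2) := by
      rw [← h1]
    rw [hps] at h2
    have h3 : ∀ k, (∏ j ∈ Finset.univ.erase k, (l k - l j)) * p.2 k = 0 := by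
      intro k
      have := congrFun (hdiag p.2) k
      rw [← this, h2]
      rfl
    have h4 : p.2 = 0 := by
      funext k
      rcases mul_eq_zero.1 (h3 k) with h | h
      · exact absurd h (hPne k)
      · exact h
    rw [hps, h4]
    rfl
  have hker : LinearMap.ker (f'₀ : ((Fin n → Fin n → ℝ) × (Fin n → ℝ)) →ₗ[ℝ] ((Fin n → Fin n → ℝ) × (Fin n → ℝ))) = ⊥ :=
    (LinearMap.ker_eq_bot' (f := (f'₀ : ((Fin n → Fin n → ℝ) × (Fin n → ℝ)) →ₗ[ℝ] ((Fin n → Fin n → ℝ) × (Fin n → ℝ))))).mpr fun m hm => hinj m hm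
  have hrange : LinearMap.range (f'₀ : ((Fin n → Fin n → ℝ) × (Fin n → ℝ)) →ₗ[ℝ] ((Fin n → Fin n → ℝ) × (Fin n → ℝ))) = ⊤ := by
    rw [LinearMap.range_eq_top]
    exact LinearMap.injective_iff_surjective.1 (LinearMap.ker_eq_bot.1 hker)
  set CLE := ContinuousLinearEquiv.ofBijective f'₀ hker hrange with hCLEdef
  have hF'cle : HasFDerivAt F ((CLE : ((Fin n → Fin n → ℝ) × (Fin n → ℝ)) →L[ℝ]
      ((Fin n → Fin n → ℝ) × (Fin n → ℝ)))) (D, l) := by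
    rw [hCLEdef, ContinuousLinearEquiv.coe_ofBijective]
    exact hF'
  have hFCAt : ContDiffAt ℝ 2 F (D, l) := hFc.contDiffAt
  have hn12 : (2 : WithTop ℕ∞) ≠ 0 := two_ne_zero
  set inv := hFCAt.localInverse hF'cle hn12 with hinvdef
  have hinvC : ContDiffAt ℝ 2 inv (F (D, l)) := hFCAt.to_localInverse hF'cle hn12
  have hFDl : F (D, l) = (D, 0) := by
    rw [hFdef]
    simp only
    rw [hGD0]
  have hinv_img : inv (F (D, l)) = (D, l) := hFCAt.localInverse_apply_image hF'cle hn12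
  have hright : ∀ᶠ y in nhds (F (D, l)), F (inv y) = y :=
    (hFCAt.hasStrictFDerivAt' hF'cle hn12).eventually_right_inverse
  rw [hFDl] at hinvC hinv_img hright
  set μ : (Fin n → Fin n → ℝ) → (Fin n → ℝ) := fun Z => (inv (Z, 0)).2 with hμdef
  have hline : ContDiffAt ℝ 2 (fun Z : Fin n → Fin n → ℝ => ((Z, 0) :
      (Fin n → Fin n → ℝ) × (Fin n → ℝ))) D := (contDiff_id.prodMk contDiff_const).contDiffAt
  have hcomp : ContDiffAt ℝ 2 (fun Z : Fin n → Fin n → ℝ => inv (Z, 0)) D :=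
    hinvC.comp D hline
  have hμC : ContDiffAt ℝ 2 μ D := contDiff_snd.contDiffAt.comp D hcomp
  have hμD : μ D = l := by
    rw [hμdef]
    simp only
    rw [hinv_img]
  have hev : ∀ᶠ Z in nhds D, F (inv (Z, 0)) = (Z, 0) := by
    have htend : Filter.Tendsto (fun Z : Fin n → Fin n → ℝ => ((Z, 0) :
        (Fin n → Fin n → ℝ) × (Fin n → ℝ))) (nhds D) (nhds (D, 0)) :=
      (continuous_id.prodMk continuous_const).continuousAt
    exact htend.eventually hright
  have hroot : ∀ᶠ Z in nhds D, ∀ k, (Matrix.of Z).charpoly.eval (μ Z k) = 0 := by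
    filter_upwards [hev] with Z hZ k
    have h1 : (inv (Z, 0)).1 = Z := congrArg Prod.fst hZ
    have h2 : G (inv (Z, 0)) = 0 := congrArg Prod.snd hZ
    have h3 : inv (Z, 0) = (Z, μ Z) := by
      rw [hμdef]
      exact Prod.ext h1 rfl
    rw [h3] at h2
    rw [sd11_charpoly_eval]
    have := congrFun h2 k
    rw [hGdef] at this
    exact this
  have hdistinct : ∀ᶠ Z in nhds D, Function.Injective (μ Z) := by
    have hc : ∀ k, ContinuousAt (fun Z => μ Z k) D :=
      fun k => (continuous_apply k).continuousAt.comp hμC.continuousAt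
    have hpair : ∀ k m : Fin n, ∀ᶠ Z in nhds D, k ≠ m → μ Z k ≠ μ Z m := by
      intro k m
      by_cases hkm : k = m
      · exact Filter.Eventually.of_forall fun Z h => absurd hkm h
      · have hsub : ContinuousAt (fun Z => μ Z k - μ Z m) D := (hc k).sub (hc m)
        have hval : (fun Z => μ Z k - μ Z m) D ≠ 0 := by
          have : μ D k - μ D m ≠ 0 := by
            rw [hμD]
            exact sub_ne_zero.2 fun h => hkm (hdist h)
          exact this
        filter_upwards [hsub.eventually_ne hval] with Z hZ _
        exact sub_ne_zero.1 hZ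
    have hall : ∀ᶠ Z in nhds D, ∀ k m : Fin n, k ≠ m → μ Z k ≠ μ Z m :=
      Filter.eventually_all.2 fun k => Filter.eventually_all.2 fun m => hpair k m
    filter_upwards [hall] with Z hZ
    intro a b hab
    by_contra hne
    exact hZ a b hne hab
  refine ⟨μ, hμC, hμD, ?_⟩
  filter_upwards [hroot, hdistinct] with Z hZ hZinj
  refine sd11_poly_fact _ (Matrix.charpoly_monic _) ?_ (μ Z) hZinj hZ
  rw [Matrix.charpoly_natDegree_eq_dim]
  exact Fintype.card_fin n

lemma sd11_second_dir {E : Type*} [NormedAddCommGroup E] [NormedSpace ℝ E]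
    {f : E → ℝ} {x : E} (hf : ContDiffAt ℝ 2 f x) (v : E) :
    fderiv ℝ (fderiv ℝ f) x v v = deriv (deriv (fun t : ℝ => f (x + t • v))) 0 := by
  obtain ⟨u, hu, hcd⟩ := hf.contDiffOn (le_refl 2) (by simp)
  have hx : x ∈ interior u := mem_interior_iff_mem_nhds.2 hu
  have hop : IsOpen (interior u) := isOpen_interior
  have hcd' : ContDiffOn ℝ 2 f (interior u) := hcd.mono interior_subset
  have hdiff : DifferentiableOn ℝ f (interior u) := hcd'.differentiableOn (by norm_num)
  have hlineC : Continuous (fun t : ℝ => x + t • v) :=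
    continuous_const.add (continuous_id.smul continuous_const)
  have hlinet : Filter.Tendsto (fun t : ℝ => x + t • v) (nhds 0) (nhds x) := by
    have h := hlineC.continuousAt (x := (0:ℝ))
    unfold ContinuousAt at h
    simpa using h
  have hmem : ∀ᶠ t in nhds (0:ℝ), x + t • v ∈ interior u :=
    hlinet.eventually (hop.eventually_mem hx)
  have hlined : ∀ t : ℝ, HasDerivAt (fun s : ℝ => x + s • v) v t := by
    intro t
    simpa using ((hasDerivAt_id t).smul_const v).const_add x
  have hg_ev : ∀ᶠ t in nhds (0:ℝ),
      HasDerivAt (fun s : ℝ => f (x + s • v)) (fderiv ℝ f (x + t • v) v) t := by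
    filter_upwards [hmem] with t ht
    have hdf : DifferentiableAt ℝ f (x + t • v) :=
      hdiff.differentiableAt (hop.mem_nhds ht)
    exact hdf.hasFDerivAt.comp_hasDerivAt t (hlined t)
  have hder1 : deriv (fun s : ℝ => f (x + s • v)) =ᶠ[nhds 0]
      fun t => fderiv ℝ f (x + t • v) v := by
    filter_upwards [hg_ev] with t ht using ht.deriv
  have hf1 : ContDiffAt ℝ 1 (fderiv ℝ f) x := hf.fderiv_right (by norm_num)
  have hd : DifferentiableAt ℝ (fderiv ℝ f) x := hf1.differentiableAt one_ne_zero
  have hu2 : HasDerivAt (fun t : ℝ => fderiv ℝ f (x + t • v))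
      (fderiv ℝ (fderiv ℝ f) x v) 0 :=
    hd.hasFDerivAt.comp_hasDerivAt_of_eq 0 (hlined 0) (by simp)
  have hval : HasDerivAt (fun t : ℝ => fderiv ℝ f (x + t • v) v)
      (fderiv ℝ (fderiv ℝ f) x v v) 0 := by
    have := hu2.clm_apply (hasDerivAt_const (0:ℝ) v)
    simpa using this
  rw [hder1.deriv_eq, hval.deriv]

lemma sd11_bilinear {n : ℕ} (T : (Fin n → ℝ) →L[ℝ] ((Fin n → ℝ) →L[ℝ] ℝ)) (y z : Fin n → ℝ) :
    T y z = ∑ k, ∑ m, T (Pi.single k 1) (Pi.single m 1) * y k * z m := by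
  have hrep : ∀ w : Fin n → ℝ, w = ∑ k, w k • (Pi.single k (1:ℝ) : Fin n → ℝ) := by
    intro w
    conv_lhs => rw [← Finset.univ_sum_single w]
    exact Finset.sum_congr rfl fun k _ => by
      rw [← Pi.single_smul, smul_eq_mul, mul_one]
  have h1 : T y = ∑ k, y k • T (Pi.single k 1) := by
    conv_lhs => rw [hrep y]
    rw [map_sum]
    exact Finset.sum_congr rfl fun k _ => by rw [map_smul]
  rw [h1, ContinuousLinearMap.sum_apply]
  refine Finset.sum_congr rfl fun k _ => ?_
  rw [ContinuousLinearMap.smul_apply]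
  have h2 : T (Pi.single k 1) z = ∑ m, z m • T (Pi.single k 1) (Pi.single m 1) := by
    conv_lhs => rw [hrep z]
    rw [map_sum]
    exact Finset.sum_congr rfl fun m _ => by rw [map_smul]
  rw [h2, smul_eq_mul, Finset.mul_sum]
  exact Finset.sum_congr rfl fun m _ => by rw [smul_eq_mul]; ring

lemma sd11_linear {n : ℕ} (T : (Fin n → ℝ) →L[ℝ] ℝ) (y : Fin n → ℝ) :
    T y = ∑ k, T (Pi.single k 1) * y k := by
  have hrep : y = ∑ k, y k • (Pi.single k (1:ℝ) : Fin n → ℝ) := by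
    conv_lhs => rw [← Finset.univ_sum_single y]
    exact Finset.sum_congr rfl fun k _ => by
      rw [← Pi.single_smul, smul_eq_mul, mul_one]
  conv_lhs => rw [hrep]
  rw [map_sum]
  exact Finset.sum_congr rfl fun k _ => by rw [map_smul, smul_eq_mul]; ring

lemma sd11_offdiag {n : ℕ} (l : Fin n → ℝ) (hdist : Function.Injective l)
    (Z : Fin n → Fin n → ℝ) (hsym : ∀ i j, Z j i = Z i j) (c : Fin n → ℝ) :
    ∑ k, (2 * ∑ m ∈ Finset.univ.erase k, Z k m ^ 2 / (l k - l m)) * c k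
      = ∑ k, ∑ m, if k = m then 0 else (c k - c m) / (l k - l m) * Z k m ^ 2 := by
  classical
  set S1 := ∑ k, ∑ m, (if k = m then (0:ℝ) else c k / (l k - l m) * Z k m ^ 2) with hS1
  set S2 := ∑ k, ∑ m, (if k = m then (0:ℝ) else c m / (l k - l m) * Z k m ^ 2) with hS2
  have h21 : S2 = -S1 := by
    rw [hS2, Finset.sum_comm, hS1, ← Finset.sum_neg_distrib]
    refine Finset.sum_congr rfl fun a _ => ?_
    rw [← Finset.sum_neg_distrib]
    refine Finset.sum_congr rfl fun b _ => ?_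
    by_cases h : a = b
    · simp [h]
    · rw [if_neg (fun hh => h hh.symm), if_neg h]
      rw [hsym a b, show l b - l a = -(l a - l b) from by ring, div_neg]
      ring
  have hT : (∑ k, ∑ m, if k = m then (0:ℝ) else (c k - c m) / (l k - l m) * Z k m ^ 2)
      = S1 - S2 := by
    rw [hS1, hS2, ← Finset.sum_sub_distrib]
    refine Finset.sum_congr rfl fun k _ => ?_
    rw [← Finset.sum_sub_distrib]
    refine Finset.sum_congr rfl fun m _ => ?_
    by_cases h : k = m
    · simp [h]
    · rw [if_neg h, if_neg h, if_neg h]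
      ring
  have hL : ∑ k, (2 * ∑ m ∈ Finset.univ.erase k, Z k m ^ 2 / (l k - l m)) * c k
      = 2 * S1 := by
    rw [hS1, Finset.mul_sum]
    refine Finset.sum_congr rfl fun k _ => ?_
    have he : ∑ m, (if k = m then (0:ℝ) else c k / (l k - l m) * Z k m ^ 2)
        = ∑ m ∈ Finset.univ.erase k, c k / (l k - l m) * Z k m ^ 2 := by
      rw [← Finset.sum_erase (s := Finset.univ) (a := k)
        (f := fun m => if k = m then (0:ℝ) else c k / (l k - l m) * Z k m ^ 2) (by simp)]
      exact Finset.sum_congr rfl fun m hm =>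
        if_neg fun h => (Finset.mem_erase.1 hm).1 h.symm
    rw [he, Finset.mul_sum, Finset.mul_sum, Finset.sum_mul]
    exact Finset.sum_congr rfl fun m _ => by ring
  rw [hL, hT, h21]
  ring

/-- `Φ` is induced by the symmetric function `φ` via the eigenvalues:
`Φ Z = φ μ` whenever `Z` is symmetric with eigenvalues `μ` (counted with
multiplicity, i.e. the characteristic polynomial of `Z` is `∏ (X - μᵢ)`). -/
def InducedByEigenvalues (n : ℕ) (φ : (Fin n → ℝ) → ℝ)
    (Φ : (Fin n → Fin n → ℝ) → ℝ) : Prop :=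
  ∀ (Z : Fin n → Fin n → ℝ) (μ : Fin n → ℝ), (Matrix.of Z).IsSymm →
    (Matrix.of Z).charpoly = ∏ i, (Polynomial.X - Polynomial.C (μ i)) →
    Φ Z = φ μ

theorem stmt_11 (n : ℕ) (φ : (Fin n → ℝ) → ℝ)
    (hφsym : ∀ (σ : Equiv.Perm (Fin n)) (x : Fin n → ℝ), φ (x ∘ σ) = φ x)
    (hφ : ContDiff ℝ 2 φ)
    (Φ : (Fin n → Fin n → ℝ) → ℝ)
    (heig : InducedByEigenvalues n φ Φ)
    (l : Fin n → ℝ) (hdist : Function.Injective l)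
    (hΦ : ContDiffAt ℝ 2 Φ (Matrix.of.symm (Matrix.diagonal l))) :
    ∀ Zdot : Fin n → Fin n → ℝ, (Matrix.of Zdot).IsSymm →
      iteratedFDeriv ℝ 2 Φ (Matrix.of.symm (Matrix.diagonal l)) ![Zdot, Zdot] =
        (∑ k, ∑ m,
            iteratedFDeriv ℝ 2 φ l ![Pi.single k 1, Pi.single m 1] *
              Zdot k k * Zdot m m) +
          ∑ k, ∑ m, if k = m then 0 else
            ((fderiv ℝ φ l (Pi.single k 1) - fderiv ℝ φ l (Pi.single m 1)) /
                (l k - l m)) * Zdot k m ^ 2 := by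
  intro Zdot hZsym
  classical
  have hsym : ∀ i j, Zdot j i = Zdot i j := fun i j => hZsym.apply i j
  set D : Fin n → Fin n → ℝ := Matrix.of.symm (Matrix.diagonal l) with hD
  have hDentry : D = fun i j => if i = j then l i else 0 := by
    funext i j
    show Matrix.diagonal l i j = _
    rw [Matrix.diagonal_apply]
  obtain ⟨μ, hμC, hμD, hμfact⟩ := sd11_mu l hdist
  rw [← hDentry] at hμC hμD hμfact
  -- the line t ↦ D + t • Zdot and the eigenvalues along it
  have hL0 : D + (0:ℝ) • Zdot = D := by simp
  have hLcd : ContDiff ℝ 2 (fun t : ℝ => D + t • Zdot) :=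
    contDiff_const.add (contDiff_id.smul contDiff_const)
  have hLt : Filter.Tendsto (fun t : ℝ => D + t • Zdot) (nhds 0) (nhds D) := by
    have h := hLcd.continuous.continuousAt (x := (0:ℝ))
    unfold ContinuousAt at h
    have h2 : (fun t : ℝ => D + t • Zdot) 0 = D := hL0
    rwa [h2] at h
  set ν : ℝ → (Fin n → ℝ) := fun t => μ (D + t • Zdot) with hνdef
  have hνC : ContDiffAt ℝ 2 ν 0 := by
    have h1 : ContDiffAt ℝ 2 μ (D + (0:ℝ) • Zdot) := by rwa [hL0]
    exact h1.comp 0 hLcd.contDiffAt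
  have hν0 : ν 0 = l := by
    rw [hνdef]
    simp only
    rw [hL0, hμD]
  have hLsym : ∀ t : ℝ, (Matrix.of (D + t • Zdot)).IsSymm := by
    intro t
    apply Matrix.IsSymm.ext
    intro i j
    show (D + t • Zdot) j i = (D + t • Zdot) i j
    have h1 : D j i = D i j := by
      rw [hDentry]
      by_cases h : i = j
      · subst h; rfl
      · simp only
        rw [if_neg h, if_neg (fun hh => h hh.symm)]
    show D j i + t * Zdot j i = D i j + t * Zdot i j
    rw [h1, hsym i j]
  have hfact : ∀ᶠ t in nhds (0:ℝ), (Matrix.of (D + t • Zdot)).charpoly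
      = ∏ i, (Polynomial.X - Polynomial.C (ν t i)) := hLt.eventually hμfact
  have hΦφ : (fun t : ℝ => Φ (D + t • Zdot)) =ᶠ[nhds (0:ℝ)] fun t => φ (ν t) := by
    filter_upwards [hfact] with t ht
    exact heig (D + t • Zdot) (ν t) (hLsym t) ht
  have hqline : ∀ t x : ℝ, sd11q n l Zdot t x
      = ((Matrix.of (D + t • Zdot)).charpoly).eval x := by
    intro t x
    rw [sd11_charpoly_eval]
    unfold sd11q
    congr 1
    ext i j
    show (if i = j then x - l i else 0) - t * Zdot i j
        = (if i = j then x else 0) - (D + t • Zdot) i j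
    have h2 : (D + t • Zdot) i j = D i j + t * Zdot i j := rfl
    rw [h2, hDentry]
    by_cases h : i = j
    · subst h
      norm_num
      ring
    · simp only [if_neg h]
      ring
  have hνk_eq : ∀ k, ∀ᶠ t in nhds (0:ℝ), sd11q n l Zdot t (ν t k) = 0 := by
    intro k
    filter_upwards [hfact] with t ht
    rw [hqline, ht, Polynomial.eval_prod]
    apply Finset.prod_eq_zero (Finset.mem_univ k)
    simp
  have hcore : ∀ k, deriv (fun t => ν t k) 0 = Zdot k k ∧
      deriv (deriv fun t => ν t k) 0
        = 2 * ∑ m ∈ Finset.univ.erase k, Zdot k m ^ 2 / (l k - l m) :=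
    fun k => sd11_core l Zdot hdist hsym k (fun t => ν t k) (contDiffAt_pi.1 hνC k)
      (by show ν 0 k = l k; rw [hν0]) (hνk_eq k)
  obtain ⟨hν_ev, hν'⟩ := sd11_c2 hνC
  set av : Fin n → ℝ := fun k => Zdot k k with havdef
  set bv : Fin n → ℝ := fun k =>
    2 * ∑ m ∈ Finset.univ.erase k, Zdot k m ^ 2 / (l k - l m) with hbvdef
  have hνd0 : HasDerivAt ν av 0 := by
    have h0 := hν_ev.self_of_nhds
    have he : deriv ν 0 = av := by
      funext k
      have hk := hasDerivAt_pi.1 h0 k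
      rw [havdef]
      simp only
      rw [← (hcore k).1]
      exact hk.deriv.symm
    rwa [he] at h0
  have hνd2 : HasDerivAt (deriv ν) bv 0 := by
    have h2 := hν'
    have he : deriv (deriv ν) 0 = bv := by
      funext k
      have hk := hasDerivAt_pi.1 h2 k
      have hcongr : (fun t => deriv ν t k) =ᶠ[nhds (0:ℝ)] deriv (fun t => ν t k) := by
        filter_upwards [hν_ev] with t ht
        exact ((hasDerivAt_pi.1 ht) k).deriv.symm
      have hk' : HasDerivAt (deriv fun t => ν t k) (deriv (deriv ν) 0 k) 0 :=
        hk.congr_of_eventuallyEq hcongr.symm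
      rw [hbvdef]
      simp only
      rw [← (hcore k).2]
      exact hk'.deriv.symm
    rwa [he] at h2
  have hφd : Differentiable ℝ φ := hφ.differentiable (by norm_num)
  have hφf : ContDiff ℝ 1 (fderiv ℝ φ) := hφ.fderiv_right (by norm_num)
  have hh_ev : ∀ᶠ t in nhds (0:ℝ),
      HasDerivAt (fun s => φ (ν s)) (fderiv ℝ φ (ν t) (deriv ν t)) t := by
    filter_upwards [hν_ev] with t ht
    exact (hφd (ν t)).hasFDerivAt.comp_hasDerivAt t ht
  have hder1 : deriv (fun s => φ (ν s)) =ᶠ[nhds (0:ℝ)]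
      fun t => fderiv ℝ φ (ν t) (deriv ν t) := by
    filter_upwards [hh_ev] with t ht using ht.deriv
  have hu2 : HasDerivAt (fun t => fderiv ℝ φ (ν t)) (fderiv ℝ (fderiv ℝ φ) l av) 0 := by
    have hdφ : DifferentiableAt ℝ (fderiv ℝ φ) l :=
      (hφf.differentiable one_ne_zero).differentiableAt
    exact hdφ.hasFDerivAt.comp_hasDerivAt_of_eq 0 hνd0 hν0.symm
  have hsecond : HasDerivAt (fun t => fderiv ℝ φ (ν t) (deriv ν t))
      (fderiv ℝ (fderiv ℝ φ) l av av + fderiv ℝ φ l bv) 0 := by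
    have h := hu2.clm_apply hνd2
    rw [hνd0.deriv, hν0] at h
    exact h
  have hfinal : deriv (deriv fun s => φ (ν s)) 0
      = fderiv ℝ (fderiv ℝ φ) l av av + fderiv ℝ φ l bv := by
    rw [hder1.deriv_eq, hsecond.deriv]
  rw [iteratedFDeriv_two_apply]
  simp only [Matrix.cons_val_zero, Matrix.cons_val_one, Matrix.head_cons]
  rw [sd11_second_dir hΦ Zdot]
  have hgg : deriv (deriv fun t : ℝ => Φ (D + t • Zdot)) 0
      = deriv (deriv fun s => φ (ν s)) 0 := (hΦφ.deriv).deriv_eq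
  rw [hgg, hfinal]
  rw [sd11_bilinear (fderiv ℝ (fderiv ℝ φ) l) av av, sd11_linear (fderiv ℝ φ l) bv]
  congr 1
  · refine Finset.sum_congr rfl fun k _ => Finset.sum_congr rfl fun m _ => ?_
    rw [iteratedFDeriv_two_apply]
    simp only [Matrix.cons_val_zero, Matrix.cons_val_one, Matrix.head_cons]
    rfl
  · have halg := sd11_offdiag l hdist Zdot hsym (fun k => fderiv ℝ φ l (Pi.single k 1))
    have hstep : ∑ k, fderiv ℝ φ l (Pi.single k 1) * bv k
        = ∑ k, (2 * ∑ m ∈ Finset.univ.erase k, Zdot k m ^ 2 / (l k - l m))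
            * fderiv ℝ φ l (Pi.single k 1) := by
      refine Finset.sum_congr rfl fun k _ => ?_
      rw [hbvdef]
      simp only
      ring
    rw [hstep, halg]
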